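/- Let π : 𝔻² → 𝒱 be the surjective map π(λ) = (λ₁², λ₂², λ₁λ₂). A function Φ : 𝒱 → ℂ is holomorphic on 𝒱 with sup_{z∈𝒱} |Φ(z)| ≤ 1 if and only if Φ∘π : 𝔻² → ℂ is holomorphic, even (i.e. (Φ∘π)(−λ) = (Φ∘π)(λ) for all λ ∈ 𝔻²), and satisfies |(Φ∘π)(λ)| ≤ 1 for all λ ∈ 𝔻². -/

import Mathlib

open Metric

noncomputable section

/-- The open unit disc in `ℂ`. -/
def uD : Set ℂ := Metric.ball (0 : ℂ) 1

/-- The open unit bidisc `𝔻²` in `ℂ²`. -/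
def biD : Set (ℂ × ℂ) := {p | p.1 ∈ uD ∧ p.2 ∈ uD}

/-- The open unit tridisc `𝔻³` in `ℂ³`. -/
def triD : Set (ℂ × ℂ × ℂ) := {z | z.1 ∈ uD ∧ z.2.1 ∈ uD ∧ z.2.2 ∈ uD}

/-- The variety `𝒱 = {z ∈ 𝔻³ : z₃² = z₁ z₂}`. -/
def calV : Set (ℂ × ℂ × ℂ) := {z | z ∈ triD ∧ z.2.2 ^ 2 = z.1 * z.2.1}

/-- A function is holomorphic on `𝒱` if near every point of `𝒱` it extends to a
holomorphic function on an open neighbourhood. -/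
def HoloOnV (f : ℂ × ℂ × ℂ → ℂ) : Prop :=
  ∀ p ∈ calV, ∃ U : Set (ℂ × ℂ × ℂ), IsOpen U ∧ p ∈ U ∧
    ∃ F : ℂ × ℂ × ℂ → ℂ, DifferentiableOn ℂ F U ∧ ∀ q ∈ U ∩ calV, F q = f q

/-- The two-to-one branched covering `π : 𝔻² → 𝒱`, `π(λ) = (λ₁², λ₂², λ₁λ₂)`. -/
def piMap (l : ℂ × ℂ) : ℂ × ℂ × ℂ := (l.1 ^ 2, l.2 ^ 2, l.1 * l.2)


open Complex MeasureTheory Real Set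

def Complex.abs : AbsoluteValue ℂ ℝ where
  toFun z := ‖z‖
  map_mul' := norm_mul
  nonneg' := norm_nonneg
  eq_zero' _ := norm_eq_zero
  add_le' := norm_add_le

lemma Complex.norm_eq_abs (z : ℂ) : ‖z‖ = Complex.abs z := rfl

lemma Complex.abs_I : Complex.abs Complex.I = 1 := Complex.norm_I

lemma Complex.abs_two : Complex.abs 2 = 2 := Complex.norm_two

lemma Complex.abs_ofReal (x : ℝ) : Complex.abs x = |x| := Complex.norm_real x

lemma Complex.continuous_abs : Continuous Complex.abs := continuous_norm

lemma abs_circleMap_zero (R : ℝ) (θ : ℝ) : Complex.abs (circleMap 0 R θ) = |R| :=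
  norm_circleMap_zero R θ

lemma mem_uD {z : ℂ} : z ∈ uD ↔ Complex.abs z < 1 := by
  simp [uD, Complex.norm_eq_abs]

lemma mem_calV_piMap {l : ℂ × ℂ} (hl : l ∈ biD) : piMap l ∈ calV := by
  obtain ⟨h1, h2⟩ := hl
  rw [mem_uD] at h1 h2
  refine ⟨⟨?_, ?_, ?_⟩, by simp [piMap]; ring⟩ <;> rw [mem_uD] <;> simp [piMap, map_pow, map_mul]
  · rwa [abs_of_nonneg (Complex.abs.nonneg _)]
  · rwa [abs_of_nonneg (Complex.abs.nonneg _)]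
  · exact mul_lt_one_of_nonneg_of_lt_one_left (Complex.abs.nonneg _) h1 h2.le

lemma exists_preimage {z : ℂ × ℂ × ℂ} (hz : z ∈ calV) : ∃ l ∈ biD, piMap l = z := by
  obtain ⟨⟨h1, h2, h3⟩, hq⟩ := hz
  rw [mem_uD] at h1 h2 h3
  rcases eq_or_ne z.1 0 with hz1 | hz1
  · have hz3 : z.2.2 = 0 := by
      have : z.2.2 ^ 2 = 0 := by rw [hq, hz1, zero_mul]
      exact pow_eq_zero_iff (by norm_num) |>.mp this
    obtain ⟨w, hw⟩ := IsAlgClosed.exists_pow_nat_eq z.2.1 (n := 2) (by norm_num)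
    refine ⟨(0, w), ⟨by simp [mem_uD], ?_⟩, ?_⟩
    · rw [mem_uD]
      have : Complex.abs w ^ 2 < 1 := by rw [← map_pow, hw]; exact h2
      nlinarith [Complex.abs.nonneg w]
    · simp only [piMap]
      ext <;> simp [hw, hz1, hz3]
  · obtain ⟨w, hw⟩ := IsAlgClosed.exists_pow_nat_eq z.1 (n := 2) (by norm_num)
    have hwne : w ≠ 0 := by rintro rfl; simp at hw; exact hz1 hw.symm
    refine ⟨(w, z.2.2 / w), ⟨?_, ?_⟩, ?_⟩
    · rw [mem_uD]
      have : Complex.abs w ^ 2 < 1 := by rw [← map_pow, hw]; exact h1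
      nlinarith [Complex.abs.nonneg w]
    · rw [mem_uD]
      have habs : Complex.abs (z.2.2 / w) ^ 2 < 1 := by
        rw [← map_pow, div_pow, hq, hw]
        rw [mul_comm, mul_div_assoc, div_self hz1, mul_one]
        exact h2
      nlinarith [Complex.abs.nonneg (z.2.2 / w)]
    · simp only [piMap]
      have : (z.2.2 / w) ^ 2 = z.2.1 := by
        rw [div_pow, hq, hw, mul_comm, mul_div_assoc, div_self hz1, mul_one]
      ext
      · simp [hw]
      · simp [this]
      · simp [mul_div_cancel₀ _ hwne]

lemma continuous_piMap : Continuous piMap := by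
  unfold piMap; fun_prop

lemma differentiable_piMap : Differentiable ℂ piMap := by
  unfold piMap; fun_prop


def Qk (f : ℂ × ℂ → ℂ) (w₁ w₂ : ℂ) (z : ℂ × ℂ × ℂ) : ℂ :=
  f (w₁, w₂) * ((w₁ * w₂ + z.2.2) * ((w₁ ^ 2 - z.1)⁻¹ * (w₂ ^ 2 - z.2.1)⁻¹))

def HH (f : ℂ × ℂ → ℂ) (r : ℝ) (θ : ℝ × ℝ) (z : ℂ × ℂ × ℂ) : ℂ :=
  (2 * ↑Real.pi * Complex.I)⁻¹ ^ 2 * deriv (circleMap 0 r) θ.1 *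
    (deriv (circleMap 0 r) θ.2 * Qk f (circleMap 0 r θ.1) (circleMap 0 r θ.2) z)

def IocSq : Set (ℝ × ℝ) := Set.Ioc (0 : ℝ) (2 * Real.pi) ×ˢ Set.Ioc (0 : ℝ) (2 * Real.pi)

def FF (f : ℂ × ℂ → ℂ) (r : ℝ) (z : ℂ × ℂ × ℂ) : ℂ := ∫ θ in IocSq, HH f r θ z

def P1 : (ℂ × ℂ × ℂ) →L[ℂ] ℂ := ContinuousLinearMap.fst ℂ ℂ (ℂ × ℂ)
def P2 : (ℂ × ℂ × ℂ) →L[ℂ] ℂ :=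
  (ContinuousLinearMap.fst ℂ ℂ ℂ).comp (ContinuousLinearMap.snd ℂ ℂ (ℂ × ℂ))
def P3 : (ℂ × ℂ × ℂ) →L[ℂ] ℂ :=
  (ContinuousLinearMap.snd ℂ ℂ ℂ).comp (ContinuousLinearMap.snd ℂ ℂ (ℂ × ℂ))

def DQ (f : ℂ × ℂ → ℂ) (w₁ w₂ : ℂ) (z : ℂ × ℂ × ℂ) : (ℂ × ℂ × ℂ) →L[ℂ] ℂ :=
  (f (w₁, w₂) * ((w₁ * w₂ + z.2.2) * (((w₁ ^ 2 - z.1)⁻¹) ^ 2 * (w₂ ^ 2 - z.2.1)⁻¹))) • P1 +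
  (f (w₁, w₂) * ((w₁ * w₂ + z.2.2) * ((w₁ ^ 2 - z.1)⁻¹ * ((w₂ ^ 2 - z.2.1)⁻¹) ^ 2))) • P2 +
  (f (w₁, w₂) * ((w₁ ^ 2 - z.1)⁻¹ * (w₂ ^ 2 - z.2.1)⁻¹)) • P3

lemma hasFDerivAt_Qk (f : ℂ × ℂ → ℂ) (w₁ w₂ : ℂ) (z : ℂ × ℂ × ℂ)
    (h1 : w₁ ^ 2 - z.1 ≠ 0) (h2 : w₂ ^ 2 - z.2.1 ≠ 0) :
    HasFDerivAt (Qk f w₁ w₂) (DQ f w₁ w₂ z) z := by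
  have hz1 : HasFDerivAt (fun z : ℂ × ℂ × ℂ => z.1) P1 z := hasFDerivAt_fst
  have hz2 : HasFDerivAt (fun z : ℂ × ℂ × ℂ => z.2.1) P2 z :=
    hasFDerivAt_fst.comp z hasFDerivAt_snd
  have hz3 : HasFDerivAt (fun z : ℂ × ℂ × ℂ => z.2.2) P3 z :=
    hasFDerivAt_snd.comp z hasFDerivAt_snd
  have hA : HasFDerivAt (fun z : ℂ × ℂ × ℂ => w₁ * w₂ + z.2.2) ((0 : (ℂ × ℂ × ℂ) →L[ℂ] ℂ) + P3)
      z := (hasFDerivAt_const (w₁ * w₂) z).add hz3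
  have hB1 : HasFDerivAt (fun z : ℂ × ℂ × ℂ => (w₁ ^ 2 - z.1)⁻¹)
      (-((w₁ ^ 2 - z.1) ^ 2)⁻¹ • ((0 : (ℂ × ℂ × ℂ) →L[ℂ] ℂ) - P1)) z :=
    (hasDerivAt_inv h1).comp_hasFDerivAt z ((hasFDerivAt_const (w₁ ^ 2) z).sub hz1)
  have hB2 : HasFDerivAt (fun z : ℂ × ℂ × ℂ => (w₂ ^ 2 - z.2.1)⁻¹)
      (-((w₂ ^ 2 - z.2.1) ^ 2)⁻¹ • ((0 : (ℂ × ℂ × ℂ) →L[ℂ] ℂ) - P2)) z :=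
    (hasDerivAt_inv h2).comp_hasFDerivAt z ((hasFDerivAt_const (w₂ ^ 2) z).sub hz2)
  have hB := hB1.mul hB2
  have hAB := hA.mul hB
  have := hAB.const_mul (f (w₁, w₂))
  refine this.congr_fderiv ?_
  refine ContinuousLinearMap.ext fun v => ?_
  simp only [DQ, ContinuousLinearMap.add_apply, ContinuousLinearMap.smul_apply,
    ContinuousLinearMap.sub_apply, ContinuousLinearMap.zero_apply, smul_eq_mul,
    ContinuousLinearMap.coe_comp', Function.comp_apply, ContinuousLinearMap.coe_fst',
    ContinuousLinearMap.coe_snd', ← inv_pow, Pi.mul_apply]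
  ring

def DH (f : ℂ × ℂ → ℂ) (r : ℝ) (θ : ℝ × ℝ) (z : ℂ × ℂ × ℂ) : (ℂ × ℂ × ℂ) →L[ℂ] ℂ :=
  ((2 * ↑Real.pi * Complex.I)⁻¹ ^ 2 * deriv (circleMap 0 r) θ.1 * deriv (circleMap 0 r) θ.2) •
    DQ f (circleMap 0 r θ.1) (circleMap 0 r θ.2) z

lemma norm_circleMap' {r : ℝ} (h0 : 0 < r) (θ : ℝ) : ‖circleMap 0 r θ‖ = r := by
  rw [Complex.norm_eq_abs, abs_circleMap_zero, abs_of_pos h0]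

lemma norm_deriv_circleMap' {r : ℝ} (h0 : 0 < r) (θ : ℝ) : ‖deriv (circleMap 0 r) θ‖ = r := by
  rw [deriv_circleMap, norm_mul, Complex.norm_eq_abs Complex.I, Complex.abs_I, mul_one,
    norm_circleMap' h0]

lemma continuous_deriv_circleMap (r : ℝ) : Continuous (deriv (circleMap 0 r)) := by
  have : deriv (circleMap 0 r) = fun θ => circleMap 0 r θ * Complex.I :=
    funext fun θ => deriv_circleMap 0 r θ
  rw [this]
  exact (continuous_circleMap 0 r).mul continuous_const

lemma circle_mem_biD {r : ℝ} (h0 : 0 < r) (h1 : r < 1) (θ₁ θ₂ : ℝ) :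
    (circleMap 0 r θ₁, circleMap 0 r θ₂) ∈ biD := by
  constructor <;> rw [mem_uD, ← Complex.norm_eq_abs, norm_circleMap' h0] <;> exact h1

lemma cont_torus {f : ℂ × ℂ → ℂ} (hf : DifferentiableOn ℂ f biD) {r : ℝ} (h0 : 0 < r)
    (h1 : r < 1) :
    Continuous fun θ : ℝ × ℝ => f (circleMap 0 r θ.1, circleMap 0 r θ.2) := by
  apply hf.continuousOn.comp_continuous
  · exact ((continuous_circleMap 0 r).comp continuous_fst).prodMk
      ((continuous_circleMap 0 r).comp continuous_snd)
  · exact fun θ => circle_mem_biD h0 h1 θ.1 θ.2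

lemma normP1 : ‖P1‖ ≤ 1 := ContinuousLinearMap.norm_fst_le ℂ ℂ (ℂ × ℂ)
lemma normP2 : ‖P2‖ ≤ 1 :=
  (ContinuousLinearMap.opNorm_comp_le _ _).trans (by
    nlinarith [ContinuousLinearMap.norm_fst_le ℂ ℂ ℂ,
      ContinuousLinearMap.norm_snd_le ℂ ℂ (ℂ × ℂ),
      ContinuousLinearMap.opNorm_nonneg (ContinuousLinearMap.snd ℂ ℂ (ℂ × ℂ)),
      ContinuousLinearMap.opNorm_nonneg (ContinuousLinearMap.fst ℂ ℂ ℂ)])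
lemma normP3 : ‖P3‖ ≤ 1 :=
  (ContinuousLinearMap.opNorm_comp_le _ _).trans (by
    nlinarith [ContinuousLinearMap.norm_snd_le ℂ ℂ ℂ,
      ContinuousLinearMap.norm_snd_le ℂ ℂ (ℂ × ℂ),
      ContinuousLinearMap.opNorm_nonneg (ContinuousLinearMap.snd ℂ ℂ (ℂ × ℂ)),
      ContinuousLinearMap.opNorm_nonneg (ContinuousLinearMap.snd ℂ ℂ ℂ)])

lemma norm_two_pi_I : ‖(2 * ↑Real.pi * Complex.I : ℂ)‖ = 2 * Real.pi := by
  simp [Complex.norm_eq_abs, map_mul, Complex.abs_I, Complex.abs_two, Complex.abs_ofReal,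
    abs_of_pos Real.pi_pos]

lemma IocSq_subset_Icc : IocSq ⊆ Set.Icc ((0 : ℝ), (0 : ℝ)) (2 * Real.pi, 2 * Real.pi) := by
  rw [← Set.Icc_prod_Icc, IocSq]
  exact Set.prod_mono Set.Ioc_subset_Icc_self Set.Ioc_subset_Icc_self

lemma volume_IocSq_lt_top : volume IocSq < ⊤ :=
  lt_of_le_of_lt (measure_mono IocSq_subset_Icc) isCompact_Icc.measure_lt_top

lemma norm_smul_CLM (c : ℂ) (L : (ℂ × ℂ × ℂ) →L[ℂ] ℂ) : ‖c • L‖ = ‖c‖ * ‖L‖ := norm_smul c L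

set_option maxHeartbeats 1000000 in
lemma FF_differentiableOn {f : ℂ × ℂ → ℂ} (hf : DifferentiableOn ℂ f biD)
    (hfb : ∀ p ∈ biD, ‖f p‖ ≤ 1) {r : ℝ} (h0 : 0 < r) (h1r : r < 1) :
    DifferentiableOn ℂ (FF f r)
      {z : ℂ × ℂ × ℂ | Complex.abs z.1 < r ^ 2 ∧ Complex.abs z.2.1 < r ^ 2} := by
  intro x₀ hx₀
  apply DifferentiableAt.differentiableWithinAt
  obtain ⟨hx1, hx2⟩ := hx₀
  rw [← Complex.norm_eq_abs] at hx1 hx2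
  set m := max ‖x₀.1‖ ‖x₀.2.1‖ with hm_def
  have hm : m < r ^ 2 := max_lt hx1 hx2
  set ε : ℝ := (r ^ 2 - m) / 2 with hε_def
  have hεpos : 0 < ε := by rw [hε_def]; linarith
  set X : ℝ := ‖x₀.2.2‖ + ε with hX_def
  -- coordinate bounds on the ball
  have hznorm : ∀ z ∈ ball x₀ ε, ‖z.1‖ ≤ m + ε ∧ ‖z.2.1‖ ≤ m + ε ∧ ‖z.2.2‖ ≤ X := by
    intro z hz
    rw [mem_ball, dist_eq_norm] at hz
    have h1 : ‖(z - x₀).1‖ ≤ ‖z - x₀‖ := norm_fst_le _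
    have h2 : ‖(z - x₀).2.1‖ ≤ ‖(z - x₀).2‖ := norm_fst_le _
    have h2' : ‖(z - x₀).2‖ ≤ ‖z - x₀‖ := norm_snd_le _
    have h3 : ‖(z - x₀).2.2‖ ≤ ‖(z - x₀).2‖ := norm_snd_le _
    simp only [Prod.fst_sub, Prod.snd_sub] at h1 h2 h2' h3
    have e1 := norm_sub_norm_le z.1 x₀.1
    have e2 := norm_sub_norm_le z.2.1 x₀.2.1
    have e3 := norm_sub_norm_le z.2.2 x₀.2.2
    have m1 : ‖x₀.1‖ ≤ m := le_max_left _ _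
    have m2 : ‖x₀.2.1‖ ≤ m := le_max_right _ _
    refine ⟨by linarith, by linarith, by linarith⟩
  have hden : ∀ z ∈ ball x₀ ε, ∀ θ : ℝ,
      ε ≤ ‖circleMap 0 r θ ^ 2 - z.1‖ ∧ ε ≤ ‖circleMap 0 r θ ^ 2 - z.2.1‖ := by
    intro z hz θ
    obtain ⟨ha, hb, -⟩ := hznorm z hz
    have hw : ‖circleMap 0 r θ ^ 2‖ = r ^ 2 := by rw [norm_pow, norm_circleMap' h0]
    have e1 := norm_sub_norm_le (circleMap 0 r θ ^ 2) z.1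
    have e2 := norm_sub_norm_le (circleMap 0 r θ ^ 2) z.2.1
    rw [hw] at e1 e2
    have hε2 : r ^ 2 - m = 2 * ε := by rw [hε_def]; ring
    exact ⟨by linarith, by linarith⟩
  have hden1 : ∀ z ∈ ball x₀ ε, ∀ θ : ℝ, circleMap 0 r θ ^ 2 - z.1 ≠ 0 := by
    intro z hz θ h
    have := (hden z hz θ).1
    rw [h, norm_zero] at this; linarith
  have hden2 : ∀ z ∈ ball x₀ ε, ∀ θ : ℝ, circleMap 0 r θ ^ 2 - z.2.1 ≠ 0 := by
    intro z hz θ h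
    have := (hden z hz θ).2
    rw [h, norm_zero] at this; linarith
  have hx₀ball : x₀ ∈ ball x₀ ε := mem_ball_self hεpos
  -- continuity of the integrand
  have hQcont : ∀ z ∈ ball x₀ ε,
      Continuous fun θ : ℝ × ℝ => Qk f (circleMap 0 r θ.1) (circleMap 0 r θ.2) z := by
    intro z hz
    unfold Qk
    refine (cont_torus hf h0 h1r).mul (Continuous.mul ?_ (Continuous.mul ?_ ?_))
    · exact (((continuous_circleMap 0 r).comp continuous_fst).mul
        ((continuous_circleMap 0 r).comp continuous_snd)).add continuous_const
    · exact Continuous.inv₀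
        ((((continuous_circleMap 0 r).comp continuous_fst).pow 2).sub continuous_const)
        fun θ => hden1 z hz θ.1
    · exact Continuous.inv₀
        ((((continuous_circleMap 0 r).comp continuous_snd).pow 2).sub continuous_const)
        fun θ => hden2 z hz θ.2
  have hHcont : ∀ z ∈ ball x₀ ε, Continuous fun θ : ℝ × ℝ => HH f r θ z := by
    intro z hz
    unfold HH
    exact (continuous_const.mul ((continuous_deriv_circleMap r).comp continuous_fst)).mul
      (((continuous_deriv_circleMap r).comp continuous_snd).mul (hQcont z hz))
  -- measurability hypotheses
  have hF_meas : ∀ᶠ z in nhds x₀, AEStronglyMeasurable (fun θ => HH f r θ z)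
      (volume.restrict IocSq) := by
    filter_upwards [ball_mem_nhds x₀ hεpos] with z hz
    exact (hHcont z hz).aestronglyMeasurable
  have hF_int : Integrable (fun θ => HH f r θ x₀) (volume.restrict IocSq) := by
    have := ((hHcont x₀ hx₀ball).continuousOn (s := Set.Icc ((0 : ℝ), (0 : ℝ))
      (2 * Real.pi, 2 * Real.pi))).integrableOn_compact (μ := volume) isCompact_Icc
    refine this.mono_set ?_
    rw [IocSq, ← Set.Icc_prod_Icc]
    exact Set.prod_mono Set.Ioc_subset_Icc_self Set.Ioc_subset_Icc_self
  have hDQcont : Continuous fun θ : ℝ × ℝ =>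
      DQ f (circleMap 0 r θ.1) (circleMap 0 r θ.2) x₀ := by
    unfold DQ
    have c1 : Continuous fun θ : ℝ × ℝ => (circleMap 0 r θ.1 ^ 2 - x₀.1)⁻¹ :=
      Continuous.inv₀
        ((((continuous_circleMap 0 r).comp continuous_fst).pow 2).sub continuous_const)
        fun θ => hden1 x₀ hx₀ball θ.1
    have c2 : Continuous fun θ : ℝ × ℝ => (circleMap 0 r θ.2 ^ 2 - x₀.2.1)⁻¹ :=
      Continuous.inv₀
        ((((continuous_circleMap 0 r).comp continuous_snd).pow 2).sub continuous_const)
        fun θ => hden2 x₀ hx₀ball θ.2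
    have c3 : Continuous fun θ : ℝ × ℝ =>
        circleMap 0 r θ.1 * circleMap 0 r θ.2 + x₀.2.2 :=
      (((continuous_circleMap 0 r).comp continuous_fst).mul
        ((continuous_circleMap 0 r).comp continuous_snd)).add continuous_const
    refine Continuous.add (Continuous.add ?_ ?_) ?_
    · exact (((cont_torus hf h0 h1r).mul (c3.mul ((c1.pow 2).mul c2))).smul continuous_const)
    · exact (((cont_torus hf h0 h1r).mul (c3.mul (c1.mul (c2.pow 2)))).smul continuous_const)
    · exact (((cont_torus hf h0 h1r).mul (c1.mul c2)).smul continuous_const)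
  have hF'_meas : AEStronglyMeasurable (fun θ => DH f r θ x₀) (volume.restrict IocSq) := by
    apply Continuous.aestronglyMeasurable
    unfold DH
    exact ((continuous_const.mul ((continuous_deriv_circleMap r).comp continuous_fst)).mul
      ((continuous_deriv_circleMap r).comp continuous_snd)).smul hDQcont
  -- the bound
  set B : ℝ := ((2 * Real.pi)⁻¹ ^ 2 * (r * r)) *
      (1 * ((r ^ 2 + X) * (ε⁻¹ ^ 2 * ε⁻¹)) + 1 * ((r ^ 2 + X) * (ε⁻¹ * ε⁻¹ ^ 2)) +
        1 * (ε⁻¹ * ε⁻¹)) with hB_def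
  have h_bound : ∀ᵐ θ ∂(volume.restrict IocSq), ∀ z ∈ ball x₀ ε, ‖DH f r θ z‖ ≤ B := by
    refine Filter.Eventually.of_forall fun θ => fun z hz => ?_
    obtain ⟨-, -, hc⟩ := hznorm z hz
    have hd1 := fun θ' => (hden z hz θ').1
    have hd2 := fun θ' => (hden z hz θ').2
    set w₁ := circleMap 0 r θ.1
    set w₂ := circleMap 0 r θ.2
    have hfw : ‖f (w₁, w₂)‖ ≤ 1 := hfb _ (circle_mem_biD h0 h1r θ.1 θ.2)
    have hA : ‖w₁ * w₂ + z.2.2‖ ≤ r ^ 2 + X := by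
      calc ‖w₁ * w₂ + z.2.2‖ ≤ ‖w₁ * w₂‖ + ‖z.2.2‖ := norm_add_le _ _
        _ ≤ r ^ 2 + X := by
            rw [norm_mul, norm_circleMap' h0, norm_circleMap' h0, ← sq]
            linarith
    have hi1 : ‖(w₁ ^ 2 - z.1)⁻¹‖ ≤ ε⁻¹ := by
      rw [norm_inv]
      exact inv_anti₀ hεpos (hd1 θ.1)
    have hi2 : ‖(w₂ ^ 2 - z.2.1)⁻¹‖ ≤ ε⁻¹ := by
      rw [norm_inv]
      exact inv_anti₀ hεpos (hd2 θ.2)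
    have hs1 : ‖f (w₁, w₂) * ((w₁ * w₂ + z.2.2) * (((w₁ ^ 2 - z.1)⁻¹) ^ 2 *
        (w₂ ^ 2 - z.2.1)⁻¹))‖ ≤ 1 * ((r ^ 2 + X) * (ε⁻¹ ^ 2 * ε⁻¹)) := by
      rw [norm_mul, norm_mul, norm_mul, norm_pow]
      gcongr <;> positivity
    have hs2 : ‖f (w₁, w₂) * ((w₁ * w₂ + z.2.2) * ((w₁ ^ 2 - z.1)⁻¹ *
        ((w₂ ^ 2 - z.2.1)⁻¹) ^ 2))‖ ≤ 1 * ((r ^ 2 + X) * (ε⁻¹ * ε⁻¹ ^ 2)) := by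
      rw [norm_mul, norm_mul, norm_mul, norm_pow]
      gcongr <;> positivity
    have hs3 : ‖f (w₁, w₂) * ((w₁ ^ 2 - z.1)⁻¹ * (w₂ ^ 2 - z.2.1)⁻¹)‖ ≤ 1 * (ε⁻¹ * ε⁻¹) := by
      rw [norm_mul, norm_mul]
      gcongr <;> positivity
    have hDQ : ‖DQ f w₁ w₂ z‖ ≤ 1 * ((r ^ 2 + X) * (ε⁻¹ ^ 2 * ε⁻¹)) +
        1 * ((r ^ 2 + X) * (ε⁻¹ * ε⁻¹ ^ 2)) + 1 * (ε⁻¹ * ε⁻¹) := by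
      have c1 : ‖(f (w₁, w₂) * ((w₁ * w₂ + z.2.2) * (((w₁ ^ 2 - z.1)⁻¹) ^ 2 *
          (w₂ ^ 2 - z.2.1)⁻¹))) • P1‖ ≤ 1 * ((r ^ 2 + X) * (ε⁻¹ ^ 2 * ε⁻¹)) := by
        calc ‖_ • P1‖ = ‖_‖ * ‖P1‖ := norm_smul _ P1
          _ ≤ _ * 1 := mul_le_mul_of_nonneg_left normP1 (norm_nonneg _)
          _ = _ := mul_one _
          _ ≤ _ := hs1
      have c2 : ‖(f (w₁, w₂) * ((w₁ * w₂ + z.2.2) * ((w₁ ^ 2 - z.1)⁻¹ *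
          ((w₂ ^ 2 - z.2.1)⁻¹) ^ 2))) • P2‖ ≤ 1 * ((r ^ 2 + X) * (ε⁻¹ * ε⁻¹ ^ 2)) := by
        calc ‖_ • P2‖ = ‖_‖ * ‖P2‖ := norm_smul _ P2
          _ ≤ _ * 1 := mul_le_mul_of_nonneg_left normP2 (norm_nonneg _)
          _ = _ := mul_one _
          _ ≤ _ := hs2
      have c3 : ‖(f (w₁, w₂) * ((w₁ ^ 2 - z.1)⁻¹ * (w₂ ^ 2 - z.2.1)⁻¹)) • P3‖ ≤
          1 * (ε⁻¹ * ε⁻¹) := by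
        calc ‖_ • P3‖ = ‖_‖ * ‖P3‖ := norm_smul _ P3
          _ ≤ _ * 1 := mul_le_mul_of_nonneg_left normP3 (norm_nonneg _)
          _ = _ := mul_one _
          _ ≤ _ := hs3
      exact norm_add₃_le.trans (add_le_add (add_le_add c1 c2) c3)
    have hcn : ‖(2 * ↑Real.pi * Complex.I)⁻¹ ^ 2 * deriv (circleMap 0 r) θ.1 *
        deriv (circleMap 0 r) θ.2‖ = (2 * Real.pi)⁻¹ ^ 2 * (r * r) := by
      rw [norm_mul, norm_mul, norm_pow, norm_inv, norm_two_pi_I, norm_deriv_circleMap' h0,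
        norm_deriv_circleMap' h0, mul_assoc]
    show ‖((2 * ↑Real.pi * Complex.I)⁻¹ ^ 2 * deriv (circleMap 0 r) θ.1 *
        deriv (circleMap 0 r) θ.2) • DQ f w₁ w₂ z‖ ≤ B
    calc ‖((2 * ↑Real.pi * Complex.I)⁻¹ ^ 2 * deriv (circleMap 0 r) θ.1 *
          deriv (circleMap 0 r) θ.2) • DQ f w₁ w₂ z‖
        = ‖(2 * ↑Real.pi * Complex.I)⁻¹ ^ 2 * deriv (circleMap 0 r) θ.1 *
          deriv (circleMap 0 r) θ.2‖ * ‖DQ f w₁ w₂ z‖ := norm_smul_CLM _ _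
      _ ≤ B := by
          rw [hcn, hB_def]
          exact mul_le_mul_of_nonneg_left hDQ (by positivity)
  have bound_int : Integrable (fun _ : ℝ × ℝ => B) (volume.restrict IocSq) := by
    rw [MeasureTheory.integrable_const_iff]
    right
    exact ⟨by rw [Measure.restrict_apply_univ]; exact volume_IocSq_lt_top⟩
  have h_diff : ∀ᵐ θ ∂(volume.restrict IocSq), ∀ z ∈ ball x₀ ε,
      HasFDerivAt (fun z => HH f r θ z) (DH f r θ z) z := by
    refine Filter.Eventually.of_forall fun θ => fun z hz => ?_
    unfold HH DH
    have hq := hasFDerivAt_Qk f (circleMap 0 r θ.1) (circleMap 0 r θ.2) z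
      (hden1 z hz θ.1) (hden2 z hz θ.2)
    have := (hq.const_mul (deriv (circleMap 0 r) θ.2)).const_mul
      ((2 * ↑Real.pi * Complex.I)⁻¹ ^ 2 * deriv (circleMap 0 r) θ.1)
    refine this.congr_fderiv ?_
    rw [smul_smul]
  have key := hasFDerivAt_integral_of_dominated_of_fderiv_le (𝕜 := ℂ) (H := ℂ × ℂ × ℂ)
    (E := ℂ) (μ := volume.restrict IocSq) (F := fun z θ => HH f r θ z)
    (F' := fun z θ => DH f r θ z) (x₀ := x₀) (bound := fun _ => B)
    (ball_mem_nhds x₀ hεpos) hF_meas hF_int hF'_meas h_bound bound_int h_diff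
  exact key.differentiableAt

lemma isOpen_biD : IsOpen biD := IsOpen.prod Metric.isOpen_ball Metric.isOpen_ball

lemma ne_zero_of_abs_lt {w a : ℂ} {r : ℝ} (hw : ‖w‖ = r) (ha : Complex.abs a < r) :
    w - a ≠ 0 ∧ w + a ≠ 0 := by
  rw [← Complex.norm_eq_abs] at ha
  constructor
  · intro h
    rw [sub_eq_zero] at h
    rw [h] at hw
    rw [hw] at ha
    exact lt_irrefl _ ha
  · intro h
    have : w = -a := by linear_combination h
    rw [this, norm_neg] at hw
    rw [hw] at ha
    exact lt_irrefl _ ha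

lemma slice_snd_diff {f : ℂ × ℂ → ℂ} (hf : DifferentiableOn ℂ f biD) {b : ℂ}
    (hb : Complex.abs b < 1) {r : ℝ} (h1r : r < 1) :
    DifferentiableOn ℂ (fun w => f (b, w)) (closedBall 0 r) := by
  intro w hw
  have hmem : (b, w) ∈ biD := by
    refine ⟨mem_uD.2 hb, mem_uD.2 ?_⟩
    rw [← Complex.norm_eq_abs]
    exact lt_of_le_of_lt (mem_closedBall_zero_iff.1 hw) h1r
  have hfat : DifferentiableAt ℂ f (b, w) := hf.differentiableAt (isOpen_biD.mem_nhds hmem)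
  exact (hfat.comp_differentiableWithinAt w
    (((differentiableAt_const b).prodMk differentiableAt_id).differentiableWithinAt))

lemma slice_fst_diff {f : ℂ × ℂ → ℂ} (hf : DifferentiableOn ℂ f biD) {b : ℂ}
    (hb : Complex.abs b < 1) {r : ℝ} (h1r : r < 1) :
    DifferentiableOn ℂ (fun w => f (w, b)) (closedBall 0 r) := by
  intro w hw
  have hmem : (w, b) ∈ biD := by
    refine ⟨mem_uD.2 ?_, mem_uD.2 hb⟩
    rw [← Complex.norm_eq_abs]
    exact lt_of_le_of_lt (mem_closedBall_zero_iff.1 hw) h1r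
  have hfat : DifferentiableAt ℂ f (w, b) := hf.differentiableAt (isOpen_biD.mem_nhds hmem)
  exact (hfat.comp_differentiableWithinAt w
    ((differentiableAt_id.prodMk (differentiableAt_const b)).differentiableWithinAt))

lemma cauchy_helper {g : ℂ → ℂ} {r : ℝ} (h0 : 0 < r)
    (hg : DifferentiableOn ℂ g (closedBall 0 r)) {a : ℂ} (ha : Complex.abs a < r) :
    (∮ w in C(0, r), (w - a)⁻¹ • g w) = (2 * ↑Real.pi * Complex.I) • g a :=
  hg.circleIntegral_sub_inv_smul (by rw [mem_ball_zero_iff, Complex.norm_eq_abs]; exact ha)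

lemma interval_to_circle (g : ℂ → ℂ) (r : ℝ) :
    (∫ θ in Set.Ioc (0 : ℝ) (2 * Real.pi), deriv (circleMap 0 r) θ * g (circleMap 0 r θ)) =
      ∮ w in C(0, r), g w := by
  rw [← intervalIntegral.integral_of_le (by positivity : (0 : ℝ) ≤ 2 * Real.pi)]
  simp only [circleIntegral, smul_eq_mul]

set_option maxHeartbeats 1000000 in
lemma FF_eq {f : ℂ × ℂ → ℂ} (hf : DifferentiableOn ℂ f biD)
    (heven : ∀ p ∈ biD, f (-p) = f p) {r : ℝ} (h0 : 0 < r) (h1r : r < 1) {l : ℂ × ℂ}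
    (hl1 : Complex.abs l.1 < r) (hl2 : Complex.abs l.2 < r) :
    FF f r (piMap l) = f l := by
  have hl1' : Complex.abs l.1 < 1 := hl1.trans h1r
  have hl2' : Complex.abs l.2 < 1 := hl2.trans h1r
  have hlbiD : l ∈ biD := ⟨mem_uD.2 hl1', mem_uD.2 hl2'⟩
  have hz1 : (piMap l).1 = l.1 ^ 2 := rfl
  have hz2 : (piMap l).2.1 = l.2 ^ 2 := rfl
  have hz3 : (piMap l).2.2 = l.1 * l.2 := rfl
  have habs1 : Complex.abs (piMap l).1 < r ^ 2 := by
    rw [hz1, map_pow]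
    exact pow_lt_pow_left₀ hl1 (Complex.abs.nonneg _) two_ne_zero
  have habs2 : Complex.abs (piMap l).2.1 < r ^ 2 := by
    rw [hz2, map_pow]
    exact pow_lt_pow_left₀ hl2 (Complex.abs.nonneg _) two_ne_zero
  -- nonvanishing of denominators for w on the circle
  have hden : ∀ w : ℂ, ‖w‖ = r → w ^ 2 - l.1 ^ 2 ≠ 0 := by
    intro w hw h
    have h1 := (ne_zero_of_abs_lt hw hl1).1
    have h2 := (ne_zero_of_abs_lt hw hl1).2
    have : (w - l.1) * (w + l.1) = 0 := by linear_combination h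
    rcases mul_eq_zero.1 this with h' | h'
    exacts [h1 h', h2 h']
  -- continuity and integrability of the full integrand
  have hQcont : Continuous fun θ : ℝ × ℝ =>
      Qk f (circleMap 0 r θ.1) (circleMap 0 r θ.2) (piMap l) := by
    unfold Qk
    have hne1 : ∀ θ : ℝ, circleMap 0 r θ ^ 2 - (piMap l).1 ≠ 0 := by
      intro θ h
      have := norm_sub_norm_le (circleMap 0 r θ ^ 2) (piMap l).1
      rw [h, norm_zero, norm_pow, norm_circleMap' h0, Complex.norm_eq_abs] at this
      linarith
    have hne2 : ∀ θ : ℝ, circleMap 0 r θ ^ 2 - (piMap l).2.1 ≠ 0 := by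
      intro θ h
      have := norm_sub_norm_le (circleMap 0 r θ ^ 2) (piMap l).2.1
      rw [h, norm_zero, norm_pow, norm_circleMap' h0, Complex.norm_eq_abs] at this
      linarith
    refine (cont_torus hf h0 h1r).mul (Continuous.mul ?_ (Continuous.mul ?_ ?_))
    · exact (((continuous_circleMap 0 r).comp continuous_fst).mul
        ((continuous_circleMap 0 r).comp continuous_snd)).add continuous_const
    · exact Continuous.inv₀
        ((((continuous_circleMap 0 r).comp continuous_fst).pow 2).sub continuous_const)
        fun θ => hne1 θ.1
    · exact Continuous.inv₀
        ((((continuous_circleMap 0 r).comp continuous_snd).pow 2).sub continuous_const)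
        fun θ => hne2 θ.2
  have hHcont : Continuous fun θ : ℝ × ℝ => HH f r θ (piMap l) := by
    unfold HH
    exact (continuous_const.mul ((continuous_deriv_circleMap r).comp continuous_fst)).mul
      (((continuous_deriv_circleMap r).comp continuous_snd).mul hQcont)
  have hint : IntegrableOn (fun θ => HH f r θ (piMap l)) IocSq volume :=
    ((hHcont.continuousOn (s := Set.Icc ((0 : ℝ), (0 : ℝ))
      (2 * Real.pi, 2 * Real.pi))).integrableOn_compact (μ := volume)
        isCompact_Icc).mono_set IocSq_subset_Icc
  -- Fubini
  have fub : FF f r (piMap l) =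
      ∫ θ₁ in Set.Ioc (0 : ℝ) (2 * Real.pi), ∫ θ₂ in Set.Ioc (0 : ℝ) (2 * Real.pi),
        HH f r (θ₁, θ₂) (piMap l) := by
    rw [FF, IocSq] at *
    rw [MeasureTheory.Measure.volume_eq_prod]
    rw [MeasureTheory.Measure.volume_eq_prod] at hint
    exact MeasureTheory.setIntegral_prod _ hint
  -- the function appearing after the inner integration
  set GG : ℂ → ℂ := fun w₁ => (w₁ ^ 2 - l.1 ^ 2)⁻¹ *
    ((w₁ + l.1) / 2 * f (w₁, l.2) + (w₁ - l.1) / 2 * f (w₁, -l.2)) with hGG_def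
  -- inner integral evaluation
  have inner : ∀ θ₁ : ℝ,
      (∫ θ₂ in Set.Ioc (0 : ℝ) (2 * Real.pi), HH f r (θ₁, θ₂) (piMap l)) =
        (2 * ↑Real.pi * Complex.I)⁻¹ ^ 2 * deriv (circleMap 0 r) θ₁ *
          ((2 * ↑Real.pi * Complex.I) * GG (circleMap 0 r θ₁)) := by
    intro θ₁
    have hw₁ : ‖circleMap 0 r θ₁‖ = r := norm_circleMap' h0 θ₁
    set w₁ := circleMap 0 r θ₁ with hw₁def
    have step1 : (∫ θ₂ in Set.Ioc (0 : ℝ) (2 * Real.pi), HH f r (θ₁, θ₂) (piMap l)) =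
        (2 * ↑Real.pi * Complex.I)⁻¹ ^ 2 * deriv (circleMap 0 r) θ₁ *
          ∫ θ₂ in Set.Ioc (0 : ℝ) (2 * Real.pi),
            deriv (circleMap 0 r) θ₂ * Qk f w₁ (circleMap 0 r θ₂) (piMap l) := by
      rw [← MeasureTheory.integral_const_mul]
      rfl
    rw [step1, interval_to_circle (fun w => Qk f w₁ w (piMap l)) r]
    congr 1
    -- now evaluate the circle integral over w₂
    have hEq : Set.EqOn (fun w => Qk f w₁ w (piMap l))
        (fun w => ((w₁ + l.1) / 2 * (w₁ ^ 2 - l.1 ^ 2)⁻¹) • ((w - l.2)⁻¹ • f (w₁, w)) -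
          (-((w₁ - l.1) / 2 * (w₁ ^ 2 - l.1 ^ 2)⁻¹)) • ((w - -l.2)⁻¹ • f (w₁, w)))
        (sphere 0 r) := by
      intro w hw
      rw [mem_sphere_zero_iff_norm] at hw
      have h1 := (ne_zero_of_abs_lt hw hl2).1
      have h2 := (ne_zero_of_abs_lt hw hl2).2
      have h3 := hden w₁ hw₁
      have hw2 : w ^ 2 - l.2 ^ 2 = (w - l.2) * (w + l.2) := by ring
      simp only [Qk, smul_eq_mul, hz1, hz2, hz3, sub_neg_eq_add]
      rw [hw2]
      field_simp
      ring
    rw [_root_.circleIntegral.integral_congr h0.le hEq]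
    have hslice : DifferentiableOn ℂ (fun w => f (w₁, w)) (closedBall 0 r) :=
      slice_snd_diff hf (by rw [← Complex.norm_eq_abs, hw₁]; exact h1r) h1r
    have hsliceC : ContinuousOn (fun w => f (w₁, w)) (sphere 0 r) :=
      hslice.continuousOn.mono sphere_subset_closedBall
    have hci1 : CircleIntegrable
        (fun w => ((w₁ + l.1) / 2 * (w₁ ^ 2 - l.1 ^ 2)⁻¹) • ((w - l.2)⁻¹ • f (w₁, w))) 0 r := by
      apply ContinuousOn.circleIntegrable h0.le
      apply ContinuousOn.fun_smul continuousOn_const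
      apply ContinuousOn.fun_smul
      · exact ContinuousOn.inv₀ (continuousOn_id.sub continuousOn_const)
          fun w hw => (ne_zero_of_abs_lt (mem_sphere_zero_iff_norm.1 hw) hl2).1
      · exact hsliceC
    have hci2 : CircleIntegrable
        (fun w => (-((w₁ - l.1) / 2 * (w₁ ^ 2 - l.1 ^ 2)⁻¹)) • ((w - -l.2)⁻¹ • f (w₁, w))) 0 r := by
      apply ContinuousOn.circleIntegrable h0.le
      apply ContinuousOn.fun_smul continuousOn_const
      apply ContinuousOn.fun_smul
      · refine ContinuousOn.inv₀ (continuousOn_id.sub continuousOn_const) fun w hw => ?_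
        have := (ne_zero_of_abs_lt (mem_sphere_zero_iff_norm.1 hw) hl2).2
        simpa [sub_neg_eq_add] using this
      · exact hsliceC
    rw [_root_.circleIntegral.integral_sub hci1 hci2, _root_.circleIntegral.integral_smul,
      _root_.circleIntegral.integral_smul,
      cauchy_helper h0 hslice hl2,
      cauchy_helper h0 hslice (by rwa [map_neg_eq_map])]
    simp only [smul_eq_mul, hGG_def]
    ring
  rw [fub]
  rw [MeasureTheory.setIntegral_congr_fun measurableSet_Ioc fun θ₁ _ => inner θ₁]
  -- outer integral
  have step2 : (∫ θ₁ in Set.Ioc (0 : ℝ) (2 * Real.pi),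
      (2 * ↑Real.pi * Complex.I)⁻¹ ^ 2 * deriv (circleMap 0 r) θ₁ *
        ((2 * ↑Real.pi * Complex.I) * GG (circleMap 0 r θ₁))) =
      (2 * ↑Real.pi * Complex.I)⁻¹ ^ 2 * (2 * ↑Real.pi * Complex.I) *
        ∫ θ₁ in Set.Ioc (0 : ℝ) (2 * Real.pi),
          deriv (circleMap 0 r) θ₁ * GG (circleMap 0 r θ₁) := by
    rw [← MeasureTheory.integral_const_mul]
    apply MeasureTheory.setIntegral_congr_fun measurableSet_Ioc
    intro θ₁ _
    ring
  rw [step2, interval_to_circle GG r]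
  have hEq2 : Set.EqOn GG
      (fun w => (2 : ℂ)⁻¹ • ((w - l.1)⁻¹ • f (w, l.2)) -
        (-(2 : ℂ)⁻¹) • ((w - -l.1)⁻¹ • f (w, -l.2))) (sphere 0 r) := by
    intro w hw
    rw [mem_sphere_zero_iff_norm] at hw
    have h1 := (ne_zero_of_abs_lt hw hl1).1
    have h2 := (ne_zero_of_abs_lt hw hl1).2
    have hw2 : w ^ 2 - l.1 ^ 2 = (w - l.1) * (w + l.1) := by ring
    simp only [hGG_def, smul_eq_mul, sub_neg_eq_add]
    rw [hw2]
    field_simp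
    ring
  rw [_root_.circleIntegral.integral_congr h0.le hEq2]
  have hsliceA : DifferentiableOn ℂ (fun w => f (w, l.2)) (closedBall 0 r) :=
    slice_fst_diff hf hl2' h1r
  have hsliceB : DifferentiableOn ℂ (fun w => f (w, -l.2)) (closedBall 0 r) :=
    slice_fst_diff hf (by rwa [map_neg_eq_map]) h1r
  have hci1 : CircleIntegrable (fun w => (2 : ℂ)⁻¹ • ((w - l.1)⁻¹ • f (w, l.2))) 0 r := by
    apply ContinuousOn.circleIntegrable h0.le
    apply ContinuousOn.fun_smul continuousOn_const
    apply ContinuousOn.fun_smul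
    · exact ContinuousOn.inv₀ (continuousOn_id.sub continuousOn_const)
        fun w hw => (ne_zero_of_abs_lt (mem_sphere_zero_iff_norm.1 hw) hl1).1
    · exact hsliceA.continuousOn.mono sphere_subset_closedBall
  have hci2 : CircleIntegrable (fun w => (-(2 : ℂ)⁻¹) • ((w - -l.1)⁻¹ • f (w, -l.2))) 0 r := by
    apply ContinuousOn.circleIntegrable h0.le
    apply ContinuousOn.fun_smul continuousOn_const
    apply ContinuousOn.fun_smul
    · refine ContinuousOn.inv₀ (continuousOn_id.sub continuousOn_const) fun w hw => ?_
      have := (ne_zero_of_abs_lt (mem_sphere_zero_iff_norm.1 hw) hl1).2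
      simpa [sub_neg_eq_add] using this
    · exact hsliceB.continuousOn.mono sphere_subset_closedBall
  rw [_root_.circleIntegral.integral_sub hci1 hci2, _root_.circleIntegral.integral_smul,
    _root_.circleIntegral.integral_smul,
    cauchy_helper h0 hsliceA hl1,
    cauchy_helper h0 hsliceB (by rwa [map_neg_eq_map])]
  have heven' : f (-l.1, -l.2) = f l := by
    rw [show ((-l.1, -l.2) : ℂ × ℂ) = -l from rfl]
    exact heven l hlbiD
  simp only [smul_eq_mul, heven']
  have h2pi : (2 * ↑Real.pi * Complex.I : ℂ) ≠ 0 := Complex.two_pi_I_ne_zero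
  field_simp
  ring

theorem stmt_11 (Φ : ℂ × ℂ × ℂ → ℂ) :
    (HoloOnV Φ ∧ ∀ z ∈ calV, ‖Φ z‖ ≤ 1) ↔
      (DifferentiableOn ℂ (Φ ∘ piMap) biD ∧
        (∀ p ∈ biD, (Φ ∘ piMap) (-p) = (Φ ∘ piMap) p) ∧
        ∀ p ∈ biD, ‖(Φ ∘ piMap) p‖ ≤ 1) := by
  constructor
  · rintro ⟨hΦ, hb⟩
    refine ⟨?_, ?_, ?_⟩
    · intro l hl
      obtain ⟨U, hUopen, hpU, F, hFdiff, hFeq⟩ := hΦ (piMap l) (mem_calV_piMap hl)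
      have hVopen : IsOpen (piMap ⁻¹' U ∩ biD) :=
        (hUopen.preimage continuous_piMap).inter isOpen_biD
      have hlV : l ∈ piMap ⁻¹' U ∩ biD := ⟨hpU, hl⟩
      have hdiff : DifferentiableAt ℂ (F ∘ piMap) l :=
        (hFdiff.differentiableAt (hUopen.mem_nhds hpU)).comp l (differentiable_piMap l)
      have : DifferentiableAt ℂ (Φ ∘ piMap) l := by
        apply hdiff.congr_of_eventuallyEq
        filter_upwards [hVopen.mem_nhds hlV] with x hx
        exact (hFeq (piMap x) ⟨hx.1, mem_calV_piMap hx.2⟩).symm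
      exact this.differentiableWithinAt
    · intro p _
      have : piMap (-p) = piMap p := by
        simp [piMap, Prod.ext_iff, neg_sq]
      simp only [Function.comp_apply, this]
    · intro p hp
      exact hb (piMap p) (mem_calV_piMap hp)
  · rintro ⟨hd, he, hbd⟩
    constructor
    · intro p hp
      have hp1 : Complex.abs p.1 < 1 := mem_uD.1 hp.1.1
      have hp2 : Complex.abs p.2.1 < 1 := mem_uD.1 hp.1.2.1
      set m := max (Complex.abs p.1) (Complex.abs p.2.1) with hm_def
      have hm0 : 0 ≤ m := le_trans (Complex.abs.nonneg _) (le_max_left _ _)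
      have hm1 : m < 1 := max_lt hp1 hp2
      set r := Real.sqrt ((1 + m) / 2) with hr_def
      have hr2 : r ^ 2 = (1 + m) / 2 := Real.sq_sqrt (by linarith)
      have h0 : 0 < r := Real.sqrt_pos.2 (by linarith)
      have h1r : r < 1 := by
        nlinarith [hr2, Real.sqrt_nonneg ((1 + m) / 2)]
      have hmr : m < r ^ 2 := by rw [hr2]; linarith
      refine ⟨{z : ℂ × ℂ × ℂ | Complex.abs z.1 < r ^ 2 ∧ Complex.abs z.2.1 < r ^ 2}, ?_,
        ⟨lt_of_le_of_lt (le_max_left _ _) hmr, lt_of_le_of_lt (le_max_right _ _) hmr⟩,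
        FF (Φ ∘ piMap) r, FF_differentiableOn hd hbd h0 h1r, ?_⟩
      · exact IsOpen.inter
          (isOpen_lt (Complex.continuous_abs.comp continuous_fst) continuous_const)
          (isOpen_lt (Complex.continuous_abs.comp (continuous_fst.comp continuous_snd))
            continuous_const)
      · rintro q ⟨hqU, hqV⟩
        obtain ⟨l, hlbiD, hlq⟩ := exists_preimage hqV
        have h1 : Complex.abs l.1 < r := by
          have : Complex.abs l.1 ^ 2 < r ^ 2 := by
            rw [← map_pow, show l.1 ^ 2 = q.1 from congrArg Prod.fst hlq]
            exact hqU.1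
          exact lt_of_pow_lt_pow_left₀ 2 h0.le this
        have h2 : Complex.abs l.2 < r := by
          have : Complex.abs l.2 ^ 2 < r ^ 2 := by
            rw [← map_pow, show l.2 ^ 2 = q.2.1 from congrArg (fun z : ℂ × ℂ × ℂ => z.2.1) hlq]
            exact hqU.2
          exact lt_of_pow_lt_pow_left₀ 2 h0.le this
        rw [← hlq, FF_eq hd he h0 h1r h1 h2]
        rfl
    · intro z hz
      obtain ⟨l, hl, hlz⟩ := exists_preimage hz
      rw [← hlz]
      exact hbd l hl
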